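/- Joint geodesic (midpoint) convexity of the log-determinant of a jointly linear map: let Φ_j : S^{n_j}_+ → S^n_+ (j in [m]) be strictly positive linear maps and g(P_1,...,P_m) := log det(Σ_j Φ_j(P_j)). Then for all positive definite tuples (P_j) and (Q_j), g(P_1 # Q_1, ..., P_m # Q_m) ≤ (1/2) g(P_1,...,P_m) + (1/2) g(Q_1,...,Q_m). -/

import Mathlib

open Matrix

/-- Real power of a matrix via the spectral decomposition (defined for Hermitian input). -/
noncomputable def mpow {d : ℕ} (A : Matrix (Fin d) (Fin d) ℝ) (t : ℝ) : Matrix (Fin d) (Fin d) ℝ :=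
  if hA : A.IsHermitian then
    (hA.eigenvectorUnitary : Matrix (Fin d) (Fin d) ℝ) *
      Matrix.diagonal (fun i => hA.eigenvalues i ^ t) *
      star (hA.eigenvectorUnitary : Matrix (Fin d) (Fin d) ℝ)
  else A

/-- The geodesic `X #ₜ Y = X^{1/2} (X^{-1/2} Y X^{-1/2})^t X^{1/2}`. -/
noncomputable def geo {d : ℕ} (X Y : Matrix (Fin d) (Fin d) ℝ) (t : ℝ) : Matrix (Fin d) (Fin d) ℝ :=
  mpow X (1/2) * mpow (mpow X (-(1/2)) * Y * mpow X (-(1/2))) t * mpow X (1/2)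

/-- The matrix geometric mean `X # Y`. -/
noncomputable def gmean {d : ℕ} (X Y : Matrix (Fin d) (Fin d) ℝ) : Matrix (Fin d) (Fin d) ℝ :=
  geo X Y (1/2)

variable {d : ℕ} {A B M : Matrix (Fin d) (Fin d) ℝ}

lemma quad_conj (B C : Matrix (Fin d) (Fin d) ℝ) (x : Fin d → ℝ) :
    x ⬝ᵥ ((Bᵀ * C * B) *ᵥ x) = (B *ᵥ x) ⬝ᵥ (C *ᵥ (B *ᵥ x)) := by
  rw [← Matrix.mulVec_mulVec, ← Matrix.mulVec_mulVec, Matrix.dotProduct_mulVec x Bᵀ,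
    ← Matrix.mulVec_transpose, Matrix.transpose_transpose]

lemma conjT_eq_transpose : Bᴴ = Bᵀ := Matrix.conjTranspose_eq_transpose_of_trivial B

lemma star_eq_transpose (B : Matrix (Fin d) (Fin d) ℝ) : star B = Bᵀ := by
  rw [Matrix.star_eq_conjTranspose, conjT_eq_transpose]

lemma isHermitian_transpose_eq (hB : B.IsHermitian) : Bᵀ = B := by
  rw [← conjT_eq_transpose, hB.eq]

lemma posDef_conj (hM : M.PosDef) (hB : ∀ x : Fin d → ℝ, x ≠ 0 → B *ᵥ x ≠ 0) :
    (Bᵀ * M * B).PosDef := by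
  refine Matrix.PosDef.of_dotProduct_mulVec_pos ?_ fun ⦃x⦄ hx => ?_
  · have : (Bᵀ * M * B).conjTranspose = Bᵀ * M * B := by
      rw [Matrix.conjTranspose_mul, Matrix.conjTranspose_mul, hM.isHermitian.eq,
        conjT_eq_transpose (B := Bᵀ), Matrix.transpose_transpose,
        conjT_eq_transpose (B := B), ← Matrix.mul_assoc]
    exact this
  · have h := hM.dotProduct_mulVec_pos (hB x hx)
    simpa [quad_conj] using h

lemma posSemidef_conj (hM : M.PosSemidef) (B : Matrix (Fin d) (Fin d) ℝ) :
    (Bᵀ * M * B).PosSemidef := by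
  have := hM.conjTranspose_mul_mul_same B
  rwa [conjT_eq_transpose] at this

lemma mpow_eq (hA : A.IsHermitian) (t : ℝ) :
    mpow A t = (hA.eigenvectorUnitary : Matrix (Fin d) (Fin d) ℝ) *
      Matrix.diagonal (fun i => hA.eigenvalues i ^ t) *
      star (hA.eigenvectorUnitary : Matrix (Fin d) (Fin d) ℝ) := by
  rw [mpow, dif_pos hA]

lemma star_mul_self_eigU (hA : A.IsHermitian) :
    star (hA.eigenvectorUnitary : Matrix (Fin d) (Fin d) ℝ) * (hA.eigenvectorUnitary : Matrix (Fin d) (Fin d) ℝ) = 1 :=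
  (Unitary.mem_iff.mp hA.eigenvectorUnitary.prop).1

lemma mul_star_self_eigU (hA : A.IsHermitian) :
    (hA.eigenvectorUnitary : Matrix (Fin d) (Fin d) ℝ) * star (hA.eigenvectorUnitary : Matrix (Fin d) (Fin d) ℝ) = 1 :=
  (Unitary.mem_iff.mp hA.eigenvectorUnitary.prop).2

lemma mpow_isHermitian (hA : A.IsHermitian) (t : ℝ) : (mpow A t).IsHermitian := by
  rw [mpow_eq hA t]
  unfold Matrix.IsHermitian
  rw [star_eq_transpose, conjT_eq_transpose]
  simp [Matrix.transpose_mul, Matrix.mul_assoc]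

lemma mpow_posSemidef (hA : A.PosDef) (t : ℝ) : (mpow A t).PosSemidef := by
  rw [mpow_eq hA.isHermitian t]
  exact Matrix.PosSemidef.mul_mul_conjTranspose_same
    (Matrix.posSemidef_diagonal_iff.mpr fun i =>
      (Real.rpow_pos_of_pos (hA.eigenvalues_pos i) t).le) _

lemma unitary_mulVec_ne_zero (U : Matrix (Fin d) (Fin d) ℝ) (hU : star U * U = 1)
    (x : Fin d → ℝ) (hx : x ≠ 0) : U *ᵥ x ≠ 0 := by
  intro h
  apply hx
  have : (star U * U) *ᵥ x = 0 := by rw [← Matrix.mulVec_mulVec, h, Matrix.mulVec_zero]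
  rwa [hU, Matrix.one_mulVec] at this

lemma mpow_posDef (hA : A.PosDef) (t : ℝ) : (mpow A t).PosDef := by
  rw [mpow_eq hA.isHermitian t]
  set U := (hA.isHermitian.eigenvectorUnitary : Matrix (Fin d) (Fin d) ℝ) with hUdef
  have hd : (Matrix.diagonal (fun i => hA.isHermitian.eigenvalues i ^ t)).PosDef :=
    Matrix.posDef_diagonal_iff.mpr fun i => Real.rpow_pos_of_pos (hA.eigenvalues_pos i) t
  have h := posDef_conj (B := star U) hd ?_
  · rw [star_eq_transpose, Matrix.transpose_transpose] at h
    rw [star_eq_transpose]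
    exact h
  · intro x hx
    apply unitary_mulVec_ne_zero (star U)
    · rw [star_star, mul_star_self_eigU hA.isHermitian]
    · exact hx

lemma mpow_zero (hA : A.IsHermitian) : mpow A 0 = 1 := by
  rw [mpow_eq hA]
  simp [mul_star_self_eigU hA]

lemma mpow_one (hA : A.IsHermitian) : mpow A 1 = A := by
  rw [mpow_eq hA]
  simp only [Real.rpow_one]
  have := hA.spectral_theorem
  simp only [RCLike.ofReal_real_eq_id, Function.comp_def, id] at this
  exact this.symm

lemma mpow_mul_mpow (hA : A.PosDef) (s t : ℝ) : mpow A s * mpow A t = mpow A (s + t) := by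
  rw [mpow_eq hA.isHermitian, mpow_eq hA.isHermitian, mpow_eq hA.isHermitian]
  set U := (hA.isHermitian.eigenvectorUnitary : Matrix (Fin d) (Fin d) ℝ)
  simp only [Matrix.mul_assoc]
  rw [← Matrix.mul_assoc (star U) U, star_mul_self_eigU hA.isHermitian, Matrix.one_mul,
    ← Matrix.mul_assoc (Matrix.diagonal _) (Matrix.diagonal _), Matrix.diagonal_mul_diagonal]
  have hf : (fun i => hA.isHermitian.eigenvalues i ^ s * hA.isHermitian.eigenvalues i ^ t)
      = (fun i => hA.isHermitian.eigenvalues i ^ (s + t)) :=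
    funext fun i => (Real.rpow_add (hA.eigenvalues_pos i) s t).symm
  rw [hf]

lemma det_mpow (hA : A.PosDef) (t : ℝ) : (mpow A t).det = A.det ^ t := by
  rw [mpow_eq hA.isHermitian]
  rw [Matrix.det_mul, Matrix.det_mul, Matrix.det_diagonal]
  rw [mul_comm, ← mul_assoc, ← Matrix.det_mul, star_mul_self_eigU hA.isHermitian]
  rw [Matrix.det_one, one_mul]
  rw [Real.finset_prod_rpow _ _ (fun i _ => (hA.eigenvalues_pos i).le)]
  have h2 : A.det = ∏ i, hA.isHermitian.eigenvalues i := by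
    simpa using hA.isHermitian.det_eq_prod_eigenvalues
  rw [h2]

lemma mulVec_ne_zero_of_left_inv {C : Matrix (Fin d) (Fin d) ℝ} (h : C * B = 1)
    {x : Fin d → ℝ} (hx : x ≠ 0) : B *ᵥ x ≠ 0 := by
  intro h0
  apply hx
  have : (C * B) *ᵥ x = 0 := by rw [← Matrix.mulVec_mulVec, h0, Matrix.mulVec_zero]
  rwa [h, Matrix.one_mulVec] at this

lemma amgm_core {S : Matrix (Fin d) (Fin d) ℝ} (hS : S.PosDef) {t : ℝ} (ht : 0 < t) :
    ((t/2) • (1 : Matrix (Fin d) (Fin d) ℝ) + (t⁻¹/2) • S - mpow S (1/2)).PosSemidef := by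
  set U := (hS.isHermitian.eigenvectorUnitary : Matrix (Fin d) (Fin d) ℝ) with hU
  set ev := hS.isHermitian.eigenvalues with hev
  have hSpec : S = U * (Matrix.diagonal ev * star U) := by
    have := hS.isHermitian.spectral_theorem
    simpa [Function.comp_def, Matrix.mul_assoc] using this
  have hone : (1 : Matrix (Fin d) (Fin d) ℝ) = U * (1 * star U) := by
    rw [Matrix.one_mul, mul_star_self_eigU hS.isHermitian]
  have hpow : mpow S (1/2) = U * (Matrix.diagonal (fun i => ev i ^ (1/2 : ℝ)) * star U) := by
    rw [mpow_eq hS.isHermitian (1/2), Matrix.mul_assoc]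
  have hdiag : Matrix.diagonal (fun i => t/2 + t⁻¹/2 * ev i - ev i ^ (1/2:ℝ))
      = (t/2) • (1 : Matrix (Fin d) (Fin d) ℝ) + (t⁻¹/2) • Matrix.diagonal ev
        - Matrix.diagonal (fun i => ev i ^ (1/2:ℝ)) := by
    ext i j
    by_cases h : i = j
    · subst h; simp [Matrix.diagonal_apply, Matrix.one_apply]
    · simp [Matrix.diagonal_apply_ne _ h, Matrix.one_apply_ne h]
  have key : (t/2) • (1 : Matrix (Fin d) (Fin d) ℝ) + (t⁻¹/2) • S - mpow S (1/2)
      = U * (Matrix.diagonal (fun i => t/2 + t⁻¹/2 * ev i - ev i ^ (1/2 : ℝ)) * star U) := by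
    rw [hdiag]
    simp only [Matrix.mul_add, Matrix.add_mul, Matrix.mul_sub, Matrix.sub_mul,
      Matrix.mul_smul, Matrix.smul_mul]
    rw [← hone, ← hSpec, ← hpow]
  have hDpsd : (Matrix.diagonal (fun i => t/2 + t⁻¹/2 * ev i - ev i ^ (1/2 : ℝ))).PosSemidef := by
    refine Matrix.posSemidef_diagonal_iff.mpr fun i => ?_
    have hl : 0 < ev i := hS.eigenvalues_pos i
    rw [← Real.sqrt_eq_rpow]
    nlinarith [Real.sq_sqrt hl.le, Real.sqrt_nonneg (ev i), sq_nonneg (t - Real.sqrt (ev i)),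
      mul_inv_cancel₀ (ne_of_gt ht), inv_pos.mpr ht, mul_pos (inv_pos.mpr ht) hl]
  have h := posSemidef_conj hDpsd (star U)
  rw [star_eq_transpose, Matrix.transpose_transpose] at h
  rw [key, ← Matrix.mul_assoc]
  rw [star_eq_transpose]
  exact h

section gmeanFacts
variable {P Q : Matrix (Fin d) (Fin d) ℝ}

lemma sqrt_mul_invsqrt (hP : P.PosDef) : mpow P (1/2) * mpow P (-(1/2)) = 1 := by
  rw [mpow_mul_mpow hP]
  have : (1/2 : ℝ) + -(1/2) = 0 := by norm_num
  rw [this, mpow_zero hP.isHermitian]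

lemma invsqrt_mul_sqrt (hP : P.PosDef) : mpow P (-(1/2)) * mpow P (1/2) = 1 := by
  rw [mpow_mul_mpow hP]
  have : (-(1/2) : ℝ) + 1/2 = 0 := by norm_num
  rw [this, mpow_zero hP.isHermitian]

lemma sqrt_mul_sqrt (hP : P.PosDef) : mpow P (1/2) * mpow P (1/2) = P := by
  rw [mpow_mul_mpow hP]
  have : (1/2 : ℝ) + 1/2 = 1 := by norm_num
  rw [this, mpow_one hP.isHermitian]

lemma inner_posDef (hP : P.PosDef) (hQ : Q.PosDef) :
    (mpow P (-(1/2)) * Q * mpow P (-(1/2))).PosDef := by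
  have hRt : (mpow P (-(1/2)))ᵀ = mpow P (-(1/2)) :=
    isHermitian_transpose_eq (mpow_isHermitian hP.isHermitian _)
  have h := posDef_conj (B := mpow P (-(1/2))) hQ
    (fun x hx => mulVec_ne_zero_of_left_inv (sqrt_mul_invsqrt hP) hx)
  rw [hRt] at h
  exact h

lemma gmean_eq (P Q : Matrix (Fin d) (Fin d) ℝ) :
    gmean P Q = mpow P (1/2) * mpow (mpow P (-(1/2)) * Q * mpow P (-(1/2))) (1/2) * mpow P (1/2) := rfl

lemma gmean_posDef (hP : P.PosDef) (hQ : Q.PosDef) : (gmean P Q).PosDef := by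
  have hSpd := mpow_posDef (inner_posDef hP hQ) (1/2)
  have hTt : (mpow P (1/2))ᵀ = mpow P (1/2) :=
    isHermitian_transpose_eq (mpow_isHermitian hP.isHermitian _)
  have h := posDef_conj (B := mpow P (1/2)) hSpd
    (fun x hx => mulVec_ne_zero_of_left_inv (invsqrt_mul_sqrt hP) hx)
  rw [hTt] at h
  rw [gmean_eq]
  exact h

lemma gmean_amgm (hP : P.PosDef) (hQ : Q.PosDef) {t : ℝ} (ht : 0 < t) :
    ((t/2) • P + (t⁻¹/2) • Q - gmean P Q).PosSemidef := by
  set S := mpow P (-(1/2)) * Q * mpow P (-(1/2)) with hSdef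
  have hSpd := inner_posDef hP hQ
  have h := amgm_core (S := S) hSpd ht
  have h2 := posSemidef_conj h (mpow P (1/2))
  have hTt : (mpow P (1/2))ᵀ = mpow P (1/2) :=
    isHermitian_transpose_eq (mpow_isHermitian hP.isHermitian _)
  rw [hTt] at h2
  have expand : mpow P (1/2) * ((t/2) • (1 : Matrix (Fin d) (Fin d) ℝ) + (t⁻¹/2) • S - mpow S (1/2)) * mpow P (1/2)
      = (t/2) • P + (t⁻¹/2) • Q - gmean P Q := by
    simp only [Matrix.mul_add, Matrix.add_mul, Matrix.mul_sub, Matrix.sub_mul,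
      Matrix.mul_smul, Matrix.smul_mul, Matrix.mul_one]
    rw [sqrt_mul_sqrt hP, gmean_eq]
    congr 2
    · rw [hSdef]
      simp only [Matrix.mul_assoc]
      rw [invsqrt_mul_sqrt hP, Matrix.mul_one, ← Matrix.mul_assoc, sqrt_mul_invsqrt hP,
        Matrix.one_mul]
  rw [expand] at h2
  exact h2

end gmeanFacts

section posMap
variable {a b : ℕ}

lemma posMap_posSemidef (Φ : Matrix (Fin a) (Fin a) ℝ →ₗ[ℝ] Matrix (Fin b) (Fin b) ℝ)
    (hΦ : ∀ X, X.PosDef → (Φ X).PosDef) {X : Matrix (Fin a) (Fin a) ℝ}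
    (hX : X.PosSemidef) : (Φ X).PosSemidef := by
  have hone : (1 : Matrix (Fin a) (Fin a) ℝ).PosDef := Matrix.PosDef.one
  have hXone : (X + 1).PosDef := by
    refine Matrix.PosDef.of_dotProduct_mulVec_pos (hX.1.add (Matrix.isHermitian_one)) fun ⦃x⦄ hx => ?_
    have h1 := hX.dotProduct_mulVec_nonneg x
    have h2 := hone.dotProduct_mulVec_pos hx
    simp only [Matrix.add_mulVec, dotProduct_add]
    linarith
  refine Matrix.PosSemidef.of_dotProduct_mulVec_nonneg ?_ ?_
  · have heq : Φ X = Φ (X + 1) - Φ 1 := by rw [map_add]; abel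
    rw [heq]
    exact ((hΦ _ hXone).isHermitian).sub ((hΦ _ hone).isHermitian)
  · intro x
    by_cases hx : x = 0
    · subst hx; simp
    · have hc : 0 < star x ⬝ᵥ (Φ 1) *ᵥ x := (hΦ _ hone).dotProduct_mulVec_pos hx
      by_contra hq
      push_neg at hq
      set q := star x ⬝ᵥ (Φ X) *ᵥ x with hqdef
      set c := star x ⬝ᵥ (Φ 1) *ᵥ x with hcdef
      have hε : (0:ℝ) < -q / c := div_pos (by linarith) hc
      have hXe : (X + (-q/c) • (1 : Matrix (Fin a) (Fin a) ℝ)).PosDef := by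
        have hsm : ((-q/c) • (1 : Matrix (Fin a) (Fin a) ℝ)).IsHermitian := by
          rw [Matrix.IsHermitian, Matrix.conjTranspose_smul, Matrix.conjTranspose_one, star_trivial]
        refine Matrix.PosDef.of_dotProduct_mulVec_pos (hX.1.add hsm) fun ⦃y⦄ hy => ?_
        · have h1 := hX.dotProduct_mulVec_nonneg y
          have h2 := hone.dotProduct_mulVec_pos hy
          simp only [Matrix.add_mulVec, dotProduct_add, Matrix.smul_mulVec,
            dotProduct_smul, smul_eq_mul]
          nlinarith
      have := (hΦ _ hXe).dotProduct_mulVec_pos hx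
      rw [map_add, _root_.map_smul] at this
      simp only [Matrix.add_mulVec, dotProduct_add, Matrix.smul_mulVec,
        dotProduct_smul, smul_eq_mul, ← hqdef, ← hcdef] at this
      rw [div_mul_cancel₀ _ (ne_of_gt hc)] at this
      linarith

end posMap

lemma posDef_diag_pos {C : Matrix (Fin d) (Fin d) ℝ} (hC : C.PosDef) (i : Fin d) :
    0 < C i i := by
  have h := hC.dotProduct_mulVec_pos (x := Pi.single i 1) (by
    intro hcontra
    have := congrFun hcontra i
    simp at this)
  simpa [Matrix.mulVec_single, dotProduct, Pi.single_apply] using h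

lemma trace_eq_sum_eigenvalues {B : Matrix (Fin d) (Fin d) ℝ} (hB : B.IsHermitian) :
    B.trace = ∑ i, hB.eigenvalues i := by
  set U := (hB.eigenvectorUnitary : Matrix (Fin d) (Fin d) ℝ)
  have hSpec : B = U * Matrix.diagonal hB.eigenvalues * star U := by
    have := hB.spectral_theorem
    simpa [Function.comp_def] using this
  conv_lhs => rw [hSpec]
  rw [Matrix.trace_mul_cycle, star_mul_self_eigU hB, Matrix.one_mul, Matrix.trace_diagonal]

lemma hadamard_ineq {C : Matrix (Fin d) (Fin d) ℝ} (hC : C.PosDef) :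
    C.det ≤ ∏ i, C i i := by
  rcases Nat.eq_zero_or_pos d with hd | hd
  · subst hd
    simp [Matrix.det_fin_zero]
  have hdiagpos : ∀ i, 0 < C i i := posDef_diag_pos hC
  set e : Fin d → ℝ := fun i => (C i i) ^ (-(1/2) : ℝ) with he
  have hepos : ∀ i, 0 < e i := fun i => Real.rpow_pos_of_pos (hdiagpos i) _
  set B := Matrix.diagonal e * C * Matrix.diagonal e with hBdef
  have hBpd : B.PosDef := by
    have h := posDef_conj (B := Matrix.diagonal e) hC
      (fun x hx => mulVec_ne_zero_of_left_inv
        (C := Matrix.diagonal (fun i => (e i)⁻¹))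
        (by rw [Matrix.diagonal_mul_diagonal]
            have : (fun i => (e i)⁻¹ * e i) = fun _ => (1:ℝ) :=
              funext fun i => inv_mul_cancel₀ (ne_of_gt (hepos i))
            rw [this, Matrix.diagonal_one]) hx)
    rwa [Matrix.diagonal_transpose] at h
  have hBii : ∀ i, B i i = 1 := by
    intro i
    rw [hBdef]
    rw [Matrix.mul_apply]
    have : ∀ j, (Matrix.diagonal e * C) i j * Matrix.diagonal e j i
        = if j = i then e i * C i i * e i else 0 := by
      intro j
      by_cases hji : j = i
      · subst hji; simp [Matrix.diagonal_mul, Matrix.diagonal_apply_eq]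
      · simp [Matrix.diagonal_apply_ne _ hji, hji]
    rw [Finset.sum_congr rfl (fun j _ => this j), Finset.sum_ite_eq' Finset.univ i
      (fun _ => e i * C i i * e i)]
    simp only [Finset.mem_univ, if_pos]
    rw [he]
    have h1 : (C i i) ^ (-(1/2):ℝ) * C i i * (C i i) ^ (-(1/2):ℝ)
        = (C i i) ^ (-(1/2) + 1 + -(1/2) : ℝ) := by
      rw [Real.rpow_add (hdiagpos i), Real.rpow_add (hdiagpos i), Real.rpow_one]
    rw [h1]
    norm_num
  set ν := hBpd.isHermitian.eigenvalues with hν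
  have hνpos : ∀ i, 0 < ν i := hBpd.eigenvalues_pos
  have htr : ∑ i, ν i = d := by
    have := trace_eq_sum_eigenvalues hBpd.isHermitian
    rw [Matrix.trace] at this
    simp only [Matrix.diag_apply] at this
    rw [← this, Finset.sum_congr rfl (fun i _ => hBii i)]
    simp
  have hdet : B.det = ∏ i, ν i := by
    simpa using hBpd.isHermitian.det_eq_prod_eigenvalues
  have hd' : (0:ℝ) < d := by exact_mod_cast hd
  have hAMGM : ∏ i, ν i ^ (1/(d:ℝ)) ≤ 1 := by
    have h := Real.geom_mean_le_arith_mean_weighted Finset.univ (fun _ => 1/(d:ℝ)) ν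
      (fun i _ => by positivity) (by simp; field_simp) (fun i _ => (hνpos i).le)
    calc ∏ i, ν i ^ (1/(d:ℝ)) ≤ ∑ i, (1/(d:ℝ)) * ν i := h
      _ = (1/(d:ℝ)) * ∑ i, ν i := by rw [Finset.mul_sum]
      _ = 1 := by rw [htr]; field_simp
  have hdetB1 : B.det ≤ 1 := by
    rw [hdet]
    have hprodpos : 0 ≤ ∏ i, ν i := Finset.prod_nonneg fun i _ => (hνpos i).le
    have heq : ∏ i, ν i = ((∏ i, ν i) ^ (1/(d:ℝ))) ^ (d:ℝ) := by
      rw [← Real.rpow_mul hprodpos, one_div, inv_mul_cancel₀ (ne_of_gt hd'), Real.rpow_one]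
    rw [heq, ← Real.finset_prod_rpow _ _ (fun i _ => (hνpos i).le)]
    exact Real.rpow_le_one (Finset.prod_nonneg fun i _ =>
      (Real.rpow_pos_of_pos (hνpos i) _).le) hAMGM (by positivity)
  have hdetB : B.det = C.det * (∏ i, C i i)⁻¹ := by
    have hee : (∏ i, e i) * (∏ i, e i) = (∏ i, C i i)⁻¹ := by
      rw [← Finset.prod_mul_distrib, ← Finset.prod_inv_distrib]
      refine Finset.prod_congr rfl fun i _ => ?_
      have hexp : (-(1/2) : ℝ) + -(1/2) = -1 := by norm_num
      rw [he]
      rw [← Real.rpow_add (hdiagpos i), hexp, Real.rpow_neg_one]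
    rw [hBdef, Matrix.det_mul, Matrix.det_mul, Matrix.det_diagonal]
    rw [show (∏ i, e i) * C.det * (∏ i, e i) = C.det * ((∏ i, e i) * (∏ i, e i)) from by ring,
      hee]
  have hprodCpos : 0 < ∏ i, C i i := Finset.prod_pos fun i _ => hdiagpos i
  rw [hdetB] at hdetB1
  calc C.det = C.det * (∏ i, C i i)⁻¹ * (∏ i, C i i) := by
        field_simp
    _ ≤ 1 * (∏ i, C i i) := by
        apply mul_le_mul_of_nonneg_right hdetB1 hprodCpos.le
    _ = ∏ i, C i i := one_mul _

lemma dot_single (A : Matrix (Fin d) (Fin d) ℝ) (i : Fin d) :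
    (Pi.single i 1 : Fin d → ℝ) ⬝ᵥ A *ᵥ (Pi.single i 1 : Fin d → ℝ) = A i i := by
  simp [Matrix.mulVec_single, dotProduct, Pi.single_apply]

lemma det_le_sqrt_det {X M N : Matrix (Fin d) (Fin d) ℝ} (hX : X.PosDef) (hM : M.PosDef)
    (hN : N.PosDef)
    (h : ∀ y : Fin d → ℝ, y ⬝ᵥ X *ᵥ y ≤ Real.sqrt (y ⬝ᵥ M *ᵥ y) * Real.sqrt (y ⬝ᵥ N *ᵥ y)) :
    X.det ≤ Real.sqrt (M.det * N.det) := by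
  have hRt : (mpow M (-(1/2)))ᵀ = mpow M (-(1/2)) :=
    isHermitian_transpose_eq (mpow_isHermitian hM.isHermitian _)
  have hRinv : ∀ x : Fin d → ℝ, x ≠ 0 → mpow M (-(1/2)) *ᵥ x ≠ 0 :=
    fun x hx => mulVec_ne_zero_of_left_inv (sqrt_mul_invsqrt hM) hx
  set R := mpow M (-(1/2)) with hRdef
  have hRM : R * M = mpow M (1/2) := by
    rw [hRdef]
    nth_rewrite 2 [← mpow_one hM.isHermitian]
    rw [mpow_mul_mpow hM, show (-(1/2) + 1 : ℝ) = 1/2 from by norm_num]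
  have hRMR : R * M * R = 1 := by rw [hRM, hRdef, sqrt_mul_invsqrt hM]
  set C := Rᵀ * X * R with hCdef
  set D := Rᵀ * N * R with hDdef
  have hC : C.PosDef := posDef_conj hX hRinv
  have hD : D.PosDef := posDef_conj hN hRinv
  have hquadC : ∀ y, y ⬝ᵥ C *ᵥ y = (R *ᵥ y) ⬝ᵥ X *ᵥ (R *ᵥ y) := fun y => quad_conj R X y
  have hquadD : ∀ y, y ⬝ᵥ D *ᵥ y = (R *ᵥ y) ⬝ᵥ N *ᵥ (R *ᵥ y) := fun y => quad_conj R N y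
  have hquad1 : ∀ y, (R *ᵥ y) ⬝ᵥ M *ᵥ (R *ᵥ y) = y ⬝ᵥ y := by
    intro y
    rw [← quad_conj R M y, hRt, hRMR, Matrix.one_mulVec]
  have h' : ∀ y, y ⬝ᵥ C *ᵥ y ≤ Real.sqrt (y ⬝ᵥ y) * Real.sqrt (y ⬝ᵥ D *ᵥ y) := by
    intro y
    rw [hquadC, hquadD, ← hquad1 y]
    exact h (R *ᵥ y)
  -- spectral decomposition of D
  set V := (hD.isHermitian.eigenvectorUnitary : Matrix (Fin d) (Fin d) ℝ) with hVdef
  set μ := hD.isHermitian.eigenvalues with hμdef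
  have hμpos : ∀ i, 0 < μ i := hD.eigenvalues_pos
  have hVDV : Vᵀ * D * V = Matrix.diagonal μ := by
    have hSpec : D = V * Matrix.diagonal μ * star V := by
      have := hD.isHermitian.spectral_theorem
      simpa [Function.comp_def] using this
    rw [← star_eq_transpose]
    conv_lhs => rw [hSpec]
    simp only [Matrix.mul_assoc]
    rw [star_mul_self_eigU hD.isHermitian, Matrix.mul_one, ← Matrix.mul_assoc,
      star_mul_self_eigU hD.isHermitian, Matrix.one_mul]
  have hVne : ∀ x : Fin d → ℝ, x ≠ 0 → V *ᵥ x ≠ 0 :=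
    fun x hx => unitary_mulVec_ne_zero V (star_mul_self_eigU hD.isHermitian) x hx
  set C' := Vᵀ * C * V with hC'def
  have hC' : C'.PosDef := posDef_conj hC hVne
  have hdetC' : C'.det = C.det := by
    rw [hC'def, Matrix.det_mul, Matrix.det_mul]
    have h1 : Vᵀ.det * V.det = 1 := by
      rw [← star_eq_transpose, ← Matrix.det_mul, star_mul_self_eigU hD.isHermitian,
        Matrix.det_one]
    rw [show Vᵀ.det * C.det * V.det = (Vᵀ.det * V.det) * C.det from by ring, h1, one_mul]
  have hVtV : Vᵀ * V = 1 := by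
    rw [← star_eq_transpose]; exact star_mul_self_eigU hD.isHermitian
  have hdiag : ∀ i, C' i i ≤ Real.sqrt (μ i) := by
    intro i
    have h1 : C' i i = (V *ᵥ Pi.single i 1) ⬝ᵥ C *ᵥ (V *ᵥ Pi.single i 1) := by
      rw [← dot_single C' i, hC'def]
      exact quad_conj V C _
    have h2 : (V *ᵥ Pi.single i 1) ⬝ᵥ (V *ᵥ Pi.single i 1) = 1 := by
      have := quad_conj V 1 (Pi.single i 1)
      rw [Matrix.mul_one, hVtV, dot_single, Matrix.one_mulVec] at this
      rw [← this, Matrix.one_apply_eq]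
    have h3 : (V *ᵥ Pi.single i 1) ⬝ᵥ D *ᵥ (V *ᵥ Pi.single i 1) = μ i := by
      have := quad_conj V D (Pi.single i 1)
      rw [hVDV, dot_single, Matrix.diagonal_apply_eq] at this
      rw [← this]
    calc C' i i = (V *ᵥ Pi.single i 1) ⬝ᵥ C *ᵥ (V *ᵥ Pi.single i 1) := h1
      _ ≤ Real.sqrt ((V *ᵥ Pi.single i 1) ⬝ᵥ (V *ᵥ Pi.single i 1)) *
          Real.sqrt ((V *ᵥ Pi.single i 1) ⬝ᵥ D *ᵥ (V *ᵥ Pi.single i 1)) := h' _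
      _ = Real.sqrt (μ i) := by rw [h2, h3, Real.sqrt_one, one_mul]
  have hdetD : D.det = ∏ i, μ i := by
    simpa using hD.isHermitian.det_eq_prod_eigenvalues
  have hCD : C.det ≤ Real.sqrt D.det := by
    calc C.det = C'.det := hdetC'.symm
      _ ≤ ∏ i, C' i i := hadamard_ineq hC'
      _ ≤ ∏ i, Real.sqrt (μ i) := Finset.prod_le_prod
          (fun i _ => (posDef_diag_pos hC' i).le) (fun i _ => hdiag i)
      _ = Real.sqrt (∏ i, μ i) := by
          simp only [Real.sqrt_eq_rpow]
          exact Real.finset_prod_rpow _ _ (fun i _ => (hμpos i).le) _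
      _ = Real.sqrt D.det := by rw [hdetD]
  -- translate determinants back
  have hMd : (0:ℝ) < M.det := hM.det_pos
  have hNd : (0:ℝ) < N.det := hN.det_pos
  have hXd : (0:ℝ) < X.det := hX.det_pos
  have hRdet : R.det * R.det = (M.det)⁻¹ := by
    rw [hRdef, det_mpow hM, ← Real.rpow_add hMd,
      show (-(1/2) + -(1/2) : ℝ) = -1 from by norm_num, Real.rpow_neg_one]
  have hdetCX : C.det = X.det * (M.det)⁻¹ := by
    rw [hCdef, hRt, Matrix.det_mul, Matrix.det_mul,
      show R.det * X.det * R.det = X.det * (R.det * R.det) from by ring, hRdet]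
  have hdetDN : D.det = N.det * (M.det)⁻¹ := by
    rw [hDdef, hRt, Matrix.det_mul, Matrix.det_mul,
      show R.det * N.det * R.det = N.det * (R.det * R.det) from by ring, hRdet]
  rw [hdetCX, hdetDN] at hCD
  have hsqrtM : Real.sqrt M.det * Real.sqrt M.det = M.det := Real.mul_self_sqrt hMd.le
  have h4 : Real.sqrt (N.det * (M.det)⁻¹) = Real.sqrt N.det * (Real.sqrt M.det)⁻¹ := by
    rw [Real.sqrt_mul hNd.le, Real.sqrt_inv]
  have h5 : X.det ≤ Real.sqrt N.det * (Real.sqrt M.det)⁻¹ * M.det := by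
    calc X.det = (X.det * (M.det)⁻¹) * M.det := by field_simp
      _ ≤ Real.sqrt (N.det * (M.det)⁻¹) * M.det :=
          mul_le_mul_of_nonneg_right hCD hMd.le
      _ = Real.sqrt N.det * (Real.sqrt M.det)⁻¹ * M.det := by rw [h4]
  have hsM : (0:ℝ) < Real.sqrt M.det := Real.sqrt_pos.mpr hMd
  calc X.det ≤ Real.sqrt N.det * (Real.sqrt M.det)⁻¹ * M.det := h5
    _ = Real.sqrt M.det * Real.sqrt N.det := by
        field_simp
        rw [sq, hsqrtM]
    _ = Real.sqrt (M.det * N.det) := (Real.sqrt_mul hMd.le _).symm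

lemma sum_mulVec2 {k d1 : ℕ} (f : Fin k → Matrix (Fin d1) (Fin d1) ℝ) (x : Fin d1 → ℝ) :
    (∑ j, f j) *ᵥ x = ∑ j, f j *ᵥ x := by
  ext i
  simp only [Matrix.mulVec, dotProduct, Finset.sum_apply, Matrix.sum_apply,
    Finset.sum_mul]
  exact Finset.sum_comm

lemma dotProduct_sum2 {k d1 : ℕ} (x : Fin d1 → ℝ) (g : Fin k → Fin d1 → ℝ) :
    x ⬝ᵥ (∑ j, g j) = ∑ j, x ⬝ᵥ g j := by
  simp only [dotProduct, Finset.sum_apply, Finset.mul_sum]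
  exact Finset.sum_comm

lemma quad_pos {A : Matrix (Fin d) (Fin d) ℝ} (hA : A.PosDef) {y : Fin d → ℝ} (hy : y ≠ 0) :
    0 < y ⬝ᵥ A *ᵥ y := by
  have := hA.dotProduct_mulVec_pos hy
  simpa using this

lemma quad_nonneg' {A : Matrix (Fin d) (Fin d) ℝ} (hA : A.PosSemidef) (y : Fin d → ℝ) :
    0 ≤ y ⬝ᵥ A *ᵥ y := by
  have := hA.dotProduct_mulVec_nonneg y
  simpa using this

lemma posDef_sum {m' n' : ℕ} (hm : 0 < m') (f : Fin m' → Matrix (Fin n') (Fin n') ℝ)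
    (hf : ∀ j, (f j).PosDef) : (∑ j, f j).PosDef := by
  refine Matrix.PosDef.of_dotProduct_mulVec_pos ?_ fun ⦃x⦄ hx => ?_
  · show (∑ j, f j)ᴴ = ∑ j, f j
    rw [Matrix.conjTranspose_sum]
    exact Finset.sum_congr rfl fun j _ => (hf j).isHermitian
  · have hexp : star x ⬝ᵥ (∑ j, f j) *ᵥ x = ∑ j, star x ⬝ᵥ (f j) *ᵥ x := by
      rw [sum_mulVec2, dotProduct_sum2]
    rw [hexp]
    have : Nonempty (Fin m') := ⟨⟨0, hm⟩⟩
    exact Finset.sum_pos (fun j _ => (hf j).dotProduct_mulVec_pos hx) Finset.univ_nonempty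


theorem stmt8 {n m : ℕ} (nj : Fin m → ℕ)
    (Φ : ∀ j : Fin m, Matrix (Fin (nj j)) (Fin (nj j)) ℝ →ₗ[ℝ] Matrix (Fin n) (Fin n) ℝ)
    (hΦ : ∀ j, ∀ X : Matrix (Fin (nj j)) (Fin (nj j)) ℝ, X.PosDef → (Φ j X).PosDef)
    (P Q : ∀ j : Fin m, Matrix (Fin (nj j)) (Fin (nj j)) ℝ)
    (hP : ∀ j, (P j).PosDef) (hQ : ∀ j, (Q j).PosDef) :
    Real.log (∑ j, Φ j (gmean (P j) (Q j))).det ≤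
      (1/2) * Real.log (∑ j, Φ j (P j)).det + (1/2) * Real.log (∑ j, Φ j (Q j)).det := by
  rcases Nat.eq_zero_or_pos m with hm | hm
  · subst hm
    simp only [Finset.univ_eq_empty, Finset.sum_empty]
    linarith
  set X := ∑ j, Φ j (gmean (P j) (Q j)) with hXdef
  set M := ∑ j, Φ j (P j) with hMdef
  set N := ∑ j, Φ j (Q j) with hNdef
  have hXpd : X.PosDef := posDef_sum hm _ (fun j => hΦ j _ (gmean_posDef (hP j) (hQ j)))
  have hMpd : M.PosDef := posDef_sum hm _ (fun j => hΦ j _ (hP j))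
  have hNpd : N.PosDef := posDef_sum hm _ (fun j => hΦ j _ (hQ j))
  have key : ∀ y : Fin n → ℝ, y ⬝ᵥ X *ᵥ y ≤
      Real.sqrt (y ⬝ᵥ M *ᵥ y) * Real.sqrt (y ⬝ᵥ N *ᵥ y) := by
    intro y
    by_cases hy : y = 0
    · subst hy
      simp
    · set a : Fin m → ℝ := fun j => y ⬝ᵥ (Φ j (P j)) *ᵥ y with hadef
      set b : Fin m → ℝ := fun j => y ⬝ᵥ (Φ j (Q j)) *ᵥ y with hbdef
      have hapos : ∀ j, 0 < a j := fun j => quad_pos (hΦ j _ (hP j)) hy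
      have hbpos : ∀ j, 0 < b j := fun j => quad_pos (hΦ j _ (hQ j)) hy
      have hj : ∀ j, y ⬝ᵥ (Φ j (gmean (P j) (Q j))) *ᵥ y ≤ Real.sqrt (a j) * Real.sqrt (b j) := by
        intro j
        set t : ℝ := Real.sqrt (b j) / Real.sqrt (a j) with htdef
        have hsa : 0 < Real.sqrt (a j) := Real.sqrt_pos.mpr (hapos j)
        have hsb : 0 < Real.sqrt (b j) := Real.sqrt_pos.mpr (hbpos j)
        have ht : 0 < t := div_pos hsb hsa
        have hpsd := posMap_posSemidef (Φ j) (hΦ j) (gmean_amgm (hP j) (hQ j) ht)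
        rw [map_sub, map_add, _root_.map_smul, _root_.map_smul] at hpsd
        have hquad := quad_nonneg' hpsd y
        simp only [Matrix.sub_mulVec, Matrix.add_mulVec, Matrix.smul_mulVec,
          dotProduct_sub, dotProduct_add, dotProduct_smul, smul_eq_mul] at hquad
        have h1 : y ⬝ᵥ (Φ j (gmean (P j) (Q j))) *ᵥ y ≤ (t/2) * a j + (t⁻¹/2) * b j := by
          rw [hadef, hbdef]
          linarith
        have h2 : (t/2) * a j + (t⁻¹/2) * b j = Real.sqrt (a j) * Real.sqrt (b j) := by
          rw [htdef]
          have h3 : Real.sqrt (a j) * Real.sqrt (a j) = a j := Real.mul_self_sqrt (hapos j).le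
          have h4 : Real.sqrt (b j) * Real.sqrt (b j) = b j := Real.mul_self_sqrt (hbpos j).le
          rw [inv_div]
          field_simp
          nlinarith [h3, h4]
        linarith [h1, h2.le]
      have hsum : y ⬝ᵥ X *ᵥ y = ∑ j, y ⬝ᵥ (Φ j (gmean (P j) (Q j))) *ᵥ y := by
        rw [hXdef, sum_mulVec2, dotProduct_sum2]
      have hsumM : y ⬝ᵥ M *ᵥ y = ∑ j, a j := by
        rw [hMdef, sum_mulVec2, dotProduct_sum2]
      have hsumN : y ⬝ᵥ N *ᵥ y = ∑ j, b j := by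
        rw [hNdef, sum_mulVec2, dotProduct_sum2]
      have hCS : ∑ j, Real.sqrt (a j) * Real.sqrt (b j) ≤
          Real.sqrt (∑ j, a j) * Real.sqrt (∑ j, b j) := by
        have h := Finset.sum_mul_sq_le_sq_mul_sq Finset.univ
          (fun j => Real.sqrt (a j)) (fun j => Real.sqrt (b j))
        have ha2 : ∀ j, Real.sqrt (a j) ^ 2 = a j := fun j => Real.sq_sqrt (hapos j).le
        have hb2 : ∀ j, Real.sqrt (b j) ^ 2 = b j := fun j => Real.sq_sqrt (hbpos j).le
        have hCS2 : (∑ j, Real.sqrt (a j) * Real.sqrt (b j))^2 ≤ (∑ j, a j) * (∑ j, b j) := by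
          calc (∑ j, Real.sqrt (a j) * Real.sqrt (b j))^2
              ≤ (∑ j, Real.sqrt (a j)^2) * (∑ j, Real.sqrt (b j)^2) := h
            _ = (∑ j, a j) * (∑ j, b j) := by
                rw [Finset.sum_congr rfl fun j _ => ha2 j, Finset.sum_congr rfl fun j _ => hb2 j]
        have hnn : 0 ≤ ∑ j, Real.sqrt (a j) * Real.sqrt (b j) :=
          Finset.sum_nonneg fun j _ => mul_nonneg (Real.sqrt_nonneg _) (Real.sqrt_nonneg _)
        rw [← Real.sqrt_mul (Finset.sum_nonneg fun j _ => (hapos j).le)]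
        exact (Real.le_sqrt hnn (mul_nonneg (Finset.sum_nonneg fun j _ => (hapos j).le)
          (Finset.sum_nonneg fun j _ => (hbpos j).le))).mpr hCS2
      calc y ⬝ᵥ X *ᵥ y = ∑ j, y ⬝ᵥ (Φ j (gmean (P j) (Q j))) *ᵥ y := hsum
        _ ≤ ∑ j, Real.sqrt (a j) * Real.sqrt (b j) := Finset.sum_le_sum fun j _ => hj j
        _ ≤ Real.sqrt (∑ j, a j) * Real.sqrt (∑ j, b j) := hCS
        _ = Real.sqrt (y ⬝ᵥ M *ᵥ y) * Real.sqrt (y ⬝ᵥ N *ᵥ y) := by rw [hsumM, hsumN]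
  have hdet := det_le_sqrt_det hXpd hMpd hNpd key
  have hXd : (0:ℝ) < X.det := hXpd.det_pos
  have hMd : (0:ℝ) < M.det := hMpd.det_pos
  have hNd : (0:ℝ) < N.det := hNpd.det_pos
  have hlog := Real.log_le_log hXd hdet
  rw [Real.log_sqrt (mul_nonneg hMd.le hNd.le), Real.log_mul (ne_of_gt hMd) (ne_of_gt hNd)]
    at hlog
  linarith
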